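/- Let R be a commutative local ring and let φ ∈ M_2(R). Then φ is very clean if and only if φ is strongly clean in M_2(R), or I_2 + φ is invertible in M_2(R). -/
import Mathlib


/-- An element `a` of a ring is *very clean* if there is an idempotent `e` commuting with `a`
such that `a - e` or `a + e` is a unit. -/
def IsVeryClean {R : Type*} [Ring R] (a : R) : Prop :=
  ∃ e : R, IsIdempotentElem e ∧ a * e = e * a ∧ (IsUnit (a - e) ∨ IsUnit (a + e))

/-- A ring is *very clean* if every element is very clean. -/
def VeryCleanRing (R : Type*) [Ring R] : Prop :=
  ∀ a : R, IsVeryClean a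

/-- An element `a` of a ring is *strongly clean* if there is an idempotent `e` commuting with `a`
such that `a - e` is a unit. -/
def IsStronglyClean {R : Type*} [Ring R] (a : R) : Prop :=
  ∃ e : R, IsIdempotentElem e ∧ a * e = e * a ∧ IsUnit (a - e)

/-- A ring is *strongly clean* if every element is strongly clean. -/
def StronglyCleanRing (R : Type*) [Ring R] : Prop :=
  ∀ a : R, IsStronglyClean a

/-- In a local ring, if `x + y` is a unit then `x` or `x - y` is a unit. -/
lemma localRing_unit_aux {R : Type*} [CommRing R] [IsLocalRing R] {x y : R}
    (h : IsUnit (x + y)) : IsUnit x ∨ IsUnit (x - y) := by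
  by_contra hc
  push_neg at hc
  obtain ⟨h1, h2⟩ := hc
  have hx : x ∈ IsLocalRing.maximalIdeal R := h1
  have hxy : x - y ∈ IsLocalRing.maximalIdeal R := h2
  have hmem : x + y ∈ IsLocalRing.maximalIdeal R := by
    have : x + y = x + x - (x - y) := by ring
    rw [this]
    exact Ideal.sub_mem _ (Ideal.add_mem _ hx hx) hxy
  exact ((IsLocalRing.mem_maximalIdeal _).mp hmem) h

/-- 2×2 determinant identity. -/
lemma det_add_add_det_sub (R : Type*) [CommRing R] (A B : Matrix (Fin 2) (Fin 2) R) :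
    (A + B).det + (A - B).det = 2 * A.det + 2 * B.det := by
  simp [Matrix.det_fin_two, Matrix.add_apply, Matrix.sub_apply]
  ring

theorem M2_very_clean_iff_strongly_clean_or_unit (R : Type*) [CommRing R] [IsLocalRing R]
    (φ : Matrix (Fin 2) (Fin 2) R) :
    IsVeryClean φ ↔
      IsStronglyClean φ ∨ IsUnit ((1 : Matrix (Fin 2) (Fin 2) R) + φ) := by
  constructor
  · rintro ⟨e, he, hc, hu | hu⟩
    · exact Or.inl ⟨e, he, hc, hu⟩
    -- φ + e is a unit
    by_cases hdet : IsUnit e.det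
    · -- then e is a unit, so e = 1
      have heu : IsUnit e := (Matrix.isUnit_iff_isUnit_det e).mpr hdet
      have he1 : e = 1 := by
        obtain ⟨v, hv⟩ := heu.exists_left_inv
        calc e = 1 * e := (one_mul e).symm
          _ = (v * e) * e := by rw [hv]
          _ = v * (e * e) := by rw [mul_assoc]
          _ = v * e := by rw [he]
          _ = 1 := hv
      right
      rw [add_comm]
      rwa [he1] at hu
    · -- det e = 0
      have hd0 : e.det = 0 := by
        have hde : e.det * e.det = e.det := by
          rw [← Matrix.det_mul, he]
        have h1 : IsUnit (1 - e.det) := by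
          rcases IsLocalRing.isUnit_or_isUnit_of_isUnit_add
            (show IsUnit (e.det + (1 - e.det)) by simp) with h | h
          · exact absurd h hdet
          · exact h
        have hz : e.det * (1 - e.det) = 0 := by linear_combination -hde
        obtain ⟨v, hv⟩ := h1.exists_right_inv
        calc e.det = e.det * ((1 - e.det) * v) := by rw [hv, mul_one]
          _ = (e.det * (1 - e.det)) * v := by rw [mul_assoc]
          _ = 0 := by rw [hz, zero_mul]
      -- determinant identity: det(φ+e) + det(φ-e) = 2 det φ
      have hid : (φ + e).det + (φ - e).det = 2 * φ.det := by
        rw [det_add_add_det_sub, hd0]; ring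
      have hdu : IsUnit (φ + e).det := (Matrix.isUnit_iff_isUnit_det _).mp hu
      have hsum : IsUnit (φ.det + ((φ + e).det - φ.det)) := by
        simpa using hdu
      rcases localRing_unit_aux hsum with h | h
      · left
        refine ⟨0, by simp [IsIdempotentElem], by simp, ?_⟩
        rw [sub_zero]
        exact (Matrix.isUnit_iff_isUnit_det φ).mpr h
      · left
        refine ⟨e, he, hc, ?_⟩
        apply (Matrix.isUnit_iff_isUnit_det _).mpr
        have : φ.det - ((φ + e).det - φ.det) = (φ - e).det := by
          linear_combination -hid
        rwa [this] at h
  · rintro (⟨e, he, hc, hu⟩ | hu)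
    · exact ⟨e, he, hc, Or.inl hu⟩
    · exact ⟨1, IsIdempotentElem.one, by rw [mul_one, one_mul], Or.inr (by rwa [add_comm])⟩
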